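/- Let R : Polynomial ℂ with R.coeff 0 ≠ 0 and natDegree R = e, let D : ℕ, and assume R and R⋆[e] are coprime (IsCoprime in Polynomial ℂ). If H : Polynomial ℂ satisfies natDegree H ≤ e + D and R * H⋆[e + D] + R⋆[e] * H = 0, then there exists S : Polynomial ℂ with natDegree S ≤ D and S⋆[D] = S such that H = (Complex.I) • (R * S). -/
import Mathlib


/-- The conjugate-reciprocal of `P` with respect to `N`. -/
noncomputable def creflect (N : ℕ) (P : Polynomial ℂ) : Polynomial ℂ :=
  Polynomial.reflect N (P.map (starRingEnd ℂ))

/-- If `R` and `R⋆` are coprime, solutions `H` of `R H⋆ + R⋆ H = 0` are of the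
form `i R S` with `S` self-reciprocal. -/
theorem coprime_antiSelfReciprocal_solutions (R : Polynomial ℂ) (e D : ℕ)
    (h0 : R.coeff 0 ≠ 0) (he : R.natDegree = e)
    (hcop : IsCoprime R (creflect e R))
    (H : Polynomial ℂ) (hH : H.natDegree ≤ e + D)
    (heq : R * creflect (e + D) H + creflect e R * H = 0) :
    ∃ S : Polynomial ℂ, S.natDegree ≤ D ∧ creflect D S = S ∧
      H = Complex.I • (R * S) := by
  classical
  have hR0 : R ≠ 0 := fun h => h0 (by simp [h])
  have hRsc : (creflect e R).coeff e = (starRingEnd ℂ) (R.coeff 0) := by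
    simp [creflect, Polynomial.coeff_reflect, Polynomial.revAt_le (le_refl e)]
  have hRs0 : creflect e R ≠ 0 := by
    intro h
    rw [h] at hRsc
    simp only [Polynomial.coeff_zero] at hRsc
    exact h0 (by simpa using hRsc.symm)
  have hdvd : R ∣ creflect e R * H :=
    ⟨-(creflect (e + D) H), by linear_combination heq⟩
  obtain ⟨T, hHT⟩ := hcop.dvd_of_dvd_mul_left hdvd
  have hTd : T.natDegree ≤ D := by
    rcases eq_or_ne T 0 with rfl | hT0
    · simp
    · have : H.natDegree = R.natDegree + T.natDegree := by
        rw [hHT, Polynomial.natDegree_mul hR0 hT0]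
      omega
  have hrefl : creflect (e + D) H = creflect e R * creflect D T := by
    rw [hHT]
    unfold creflect
    rw [Polynomial.map_mul,
      Polynomial.reflect_mul _ _ (le_trans Polynomial.natDegree_map_le he.le)
        (le_trans Polynomial.natDegree_map_le hTd)]
  have key : R * creflect e R * (creflect D T + T) = 0 := by
    rw [hrefl, hHT] at heq
    linear_combination heq
  have hanti : creflect D T = -T := by
    rcases mul_eq_zero.mp key with h | h
    · exact absurd h (mul_ne_zero hR0 hRs0)
    · linear_combination h
  refine ⟨(-Complex.I) • T, le_trans (Polynomial.natDegree_smul_le _ _) hTd, ?_, ?_⟩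
  · have hS : (-Complex.I) • T = Polynomial.C (-Complex.I) * T := by
      rw [Polynomial.smul_eq_C_mul]
    rw [hS]
    unfold creflect
    rw [Polynomial.map_mul, Polynomial.map_C, Polynomial.reflect_C_mul]
    have : Polynomial.reflect D (T.map (starRingEnd ℂ)) = -T := hanti
    rw [this]
    simp
  · rw [hHT, Polynomial.smul_eq_C_mul, Polynomial.smul_eq_C_mul]
    have : Polynomial.C Complex.I * (R * (Polynomial.C (-Complex.I) * T)) =
        (Polynomial.C Complex.I * Polynomial.C (-Complex.I)) * (R * T) := by ring
    rw [this, ← Polynomial.C_mul]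
    simp [Complex.I_mul_I]
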